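/- Let a > 0 and σ ∈ ℝ. Let P_L be a diagonal positive-definite real (N+1)×(N+1) matrix and Q_L a real (N+1)×(N+1) matrix with Q_L + Q_Lᵀ = diag(−1,0,…,0,1); let P_R be a diagonal positive-definite real (M+1)×(M+1) matrix and Q_R a real (M+1)×(M+1) matrix with Q_R + Q_Rᵀ = diag(−1,0,…,0,1). Let g_L : ℝ → ℝ, and let u : ℝ → ℝ^{N+1} and v : ℝ → ℝ^{M+1} be differentiable and satisfy the semi-discrete equations u'(t) = −a P_L⁻¹ Q_L u(t) + σ P_L⁻¹ e_N (u_N(t) − v_0(t)) − a P_L⁻¹ e_0 (u_0(t) − g_L(t)) and v'(t) = −a P_R⁻¹ Q_R v(t) + (σ − a) P_R⁻¹ ê_0 (v_0(t) − u_N(t)), where e_0, e_N are the first and last standard basis vectors of ℝ^{N+1}, ê_0 is the first standard basis vector of ℝ^{M+1}, and u_0, u_N, v_0, v_M denote the first/last components of u and v. Then for all t, d/dt (u(t)ᵀ P_L u(t) + v(t)ᵀ P_R v(t)) = a g_L(t)² − a v_M(t)² − a (u_0(t) − g_L(t))² + (2σ − a)(u_N(t) − v_0(t))². -/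

import Mathlib

open Matrix

/-- The boundary matrix `B = diag(-1, 0, …, 0, 1)` of size `(n+1) × (n+1)`. -/
noncomputable def sbpBoundaryMatrix (n : ℕ) : Matrix (Fin (n + 1)) (Fin (n + 1)) ℝ :=
  Matrix.diagonal fun i => (if i = Fin.last n then (1 : ℝ) else 0) + (if i = 0 then -1 else 0)

lemma diag_cancel {n : ℕ} (p : Fin n → ℝ) (hp : ∀ i, 0 < p i) (x : Fin n → ℝ) :
    Matrix.diagonal p *ᵥ ((Matrix.diagonal p)⁻¹ *ᵥ x) = x := by
  rw [Matrix.mulVec_mulVec, Matrix.mul_nonsing_inv, Matrix.one_mulVec]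
  rw [Matrix.det_diagonal]
  exact isUnit_iff_ne_zero.mpr (Finset.prod_pos fun i _ => hp i).ne'

lemma hasDerivAt_quad {n : ℕ} (p : Fin n → ℝ) (w : ℝ → Fin n → ℝ) (w' : Fin n → ℝ)
    (t : ℝ) (h : HasDerivAt w w' t) :
    HasDerivAt (fun s => w s ⬝ᵥ (Matrix.diagonal p *ᵥ w s))
      (2 * (w t ⬝ᵥ (Matrix.diagonal p *ᵥ w'))) t := by
  have hi : ∀ i, HasDerivAt (fun s => w s i) (w' i) t := fun i => hasDerivAt_pi.mp h i
  simp only [dotProduct, Matrix.mulVec_diagonal]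
  have h2 : HasDerivAt (fun s => ∑ i, w s i * (p i * w s i))
      (∑ i, (w' i * (p i * w t i) + w t i * (p i * w' i))) t :=
    HasDerivAt.fun_sum fun i _ => (hi i).mul ((hi i).const_mul (p i))
  convert h2 using 1
  rw [Finset.mul_sum]
  exact Finset.sum_congr rfl fun i _ => by ring

lemma bquad {n : ℕ} (w : Fin (n + 1) → ℝ) :
    w ⬝ᵥ (sbpBoundaryMatrix n *ᵥ w) = w (Fin.last n) ^ 2 - w 0 ^ 2 := by
  simp only [sbpBoundaryMatrix, dotProduct, Matrix.mulVec_diagonal]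
  have key : ∀ i, w i * (((if i = Fin.last n then (1:ℝ) else 0) + (if i = 0 then -1 else 0)) * w i)
      = (if i = Fin.last n then w i ^ 2 else 0) + (if i = 0 then -(w i ^ 2) else 0) := by
    intro i; split_ifs <;> ring
  simp_rw [key, Finset.sum_add_distrib, Finset.sum_ite_eq', Finset.mem_univ, if_true]
  ring

lemma symquad {n : ℕ} (Q : Matrix (Fin (n + 1)) (Fin (n + 1)) ℝ)
    (hQ : Q + Qᵀ = sbpBoundaryMatrix n) (w : Fin (n + 1) → ℝ) :
    2 * (w ⬝ᵥ (Q *ᵥ w)) = w (Fin.last n) ^ 2 - w 0 ^ 2 := by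
  have h1 : w ⬝ᵥ (Qᵀ *ᵥ w) = w ⬝ᵥ (Q *ᵥ w) := by
    rw [Matrix.mulVec_transpose, Matrix.dotProduct_mulVec, dotProduct_comm]
  have h2 : w ⬝ᵥ ((Q + Qᵀ) *ᵥ w) = w (Fin.last n) ^ 2 - w 0 ^ 2 := by
    rw [hQ]; exact bquad w
  rw [Matrix.add_mulVec, dotProduct_add, h1] at h2
  linarith

/-- Discrete energy rate for the two-domain semi-discrete SBP–SAT scheme for
the advection equation `u_t + a u_x = 0`, with interface penalties
`σ^L = σ`, `σ^R = σ − a` and left boundary penalty `τ_L = −a`: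
`d/dt (uᵀ P_L u + vᵀ P_R v) = a g_L² − a v_M² − a (u_0 − g_L)² + (2σ − a)(u_N − v_0)²`. -/
theorem sbp_sat_advection_energy_rate
    (N M : ℕ) (a σ : ℝ) (ha : 0 < a)
    (pL : Fin (N + 1) → ℝ) (hpL : ∀ i, 0 < pL i)
    (QL : Matrix (Fin (N + 1)) (Fin (N + 1)) ℝ)
    (hQL : QL + QLᵀ = sbpBoundaryMatrix N)
    (pR : Fin (M + 1) → ℝ) (hpR : ∀ i, 0 < pR i)
    (QR : Matrix (Fin (M + 1)) (Fin (M + 1)) ℝ)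
    (hQR : QR + QRᵀ = sbpBoundaryMatrix M)
    (gL : ℝ → ℝ)
    (u : ℝ → Fin (N + 1) → ℝ) (v : ℝ → Fin (M + 1) → ℝ)
    (hu : ∀ t : ℝ, HasDerivAt u
      ((-a) • ((Matrix.diagonal pL)⁻¹ *ᵥ (QL *ᵥ u t))
        + (σ * (u t (Fin.last N) - v t 0)) •
            ((Matrix.diagonal pL)⁻¹ *ᵥ Pi.single (Fin.last N) 1)
        - (a * (u t 0 - gL t)) • ((Matrix.diagonal pL)⁻¹ *ᵥ Pi.single 0 1)) t)
    (hv : ∀ t : ℝ, HasDerivAt v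
      ((-a) • ((Matrix.diagonal pR)⁻¹ *ᵥ (QR *ᵥ v t))
        + ((σ - a) * (v t 0 - u t (Fin.last N))) •
            ((Matrix.diagonal pR)⁻¹ *ᵥ Pi.single 0 1)) t) :
    ∀ t : ℝ, HasDerivAt
      (fun s => u s ⬝ᵥ (Matrix.diagonal pL *ᵥ u s) + v s ⬝ᵥ (Matrix.diagonal pR *ᵥ v s))
      (a * gL t ^ 2 - a * v t (Fin.last M) ^ 2 - a * (u t 0 - gL t) ^ 2
        + (2 * σ - a) * (u t (Fin.last N) - v t 0) ^ 2) t := by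
  intro t
  have hL := hasDerivAt_quad pL u _ t (hu t)
  have hR := hasDerivAt_quad pR v _ t (hv t)
  have cL : Matrix.diagonal pL *ᵥ
      ((-a) • ((Matrix.diagonal pL)⁻¹ *ᵥ (QL *ᵥ u t))
        + (σ * (u t (Fin.last N) - v t 0)) •
            ((Matrix.diagonal pL)⁻¹ *ᵥ Pi.single (Fin.last N) 1)
        - (a * (u t 0 - gL t)) • ((Matrix.diagonal pL)⁻¹ *ᵥ Pi.single 0 1))
      = (-a) • (QL *ᵥ u t)
        + (σ * (u t (Fin.last N) - v t 0)) • (Pi.single (Fin.last N) 1 : Fin (N+1) → ℝ)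
        - (a * (u t 0 - gL t)) • (Pi.single 0 1 : Fin (N+1) → ℝ) := by
    rw [Matrix.mulVec_sub, Matrix.mulVec_add, Matrix.mulVec_smul, Matrix.mulVec_smul,
      Matrix.mulVec_smul, diag_cancel pL hpL, diag_cancel pL hpL, diag_cancel pL hpL]
  have cR : Matrix.diagonal pR *ᵥ
      ((-a) • ((Matrix.diagonal pR)⁻¹ *ᵥ (QR *ᵥ v t))
        + ((σ - a) * (v t 0 - u t (Fin.last N))) •
            ((Matrix.diagonal pR)⁻¹ *ᵥ Pi.single 0 1))
      = (-a) • (QR *ᵥ v t)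
        + ((σ - a) * (v t 0 - u t (Fin.last N))) • (Pi.single 0 1 : Fin (M+1) → ℝ) := by
    rw [Matrix.mulVec_add, Matrix.mulVec_smul, Matrix.mulVec_smul,
      diag_cancel pR hpR, diag_cancel pR hpR]
  rw [cL] at hL
  rw [cR] at hR
  have h := hL.fun_add hR
  convert h using 1
  · rfl
  · rfl
  have q1 := symquad QL hQL (u t)
  have q2 := symquad QR hQR (v t)
  simp only [dotProduct_add, dotProduct_sub, dotProduct_smul, smul_eq_mul,
    dotProduct_single, mul_one]
  linear_combination a * q1 + a * q2
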